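/- In one variable, if μ, ν are functionals with conditionally free convolution data such that C_{(μ,ν)}(z) = α R_ν(z) for a scalar α, where C is determined by C(z(1 + M_ν(z)))·(1 + M_μ(z)) = M_μ(z)·(1 + M_ν(z)) and R_ν is the free cumulant series of ν (satisfying R_ν(z(1+M_ν(z))) = M_ν(z)), then η_μ(z) = α·η_ν(z), i.e., μ = ν^{⊎α} is a Boolean convolution power of ν. -/

import Mathlib

open PowerSeries

/-- Formal composition `F(V)` of power series, valid when `V` has zero constant term. -/
noncomputable def pcomp (F V : PowerSeries ℂ) : PowerSeries ℂ :=
  PowerSeries.mk fun n =>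
    ∑ k ∈ Finset.range (n + 1), PowerSeries.coeff k F * PowerSeries.coeff n (V ^ k)

lemma pcomp_smul (c : ℂ) (F V : PowerSeries ℂ) :
    pcomp (c • F) V = c • pcomp F V := by
  ext n
  simp [pcomp, Finset.mul_sum, mul_assoc]

/-- Conditionally free convolution data with `C_{(μ,ν)} = α R_ν` forces
`η_μ = α η_ν`, i.e. `μ = ν^{⊎α}` is a Boolean convolution power of `ν`. -/
theorem stmt_17 (α : ℂ) (Mμ Mν Rν Cs : PowerSeries ℂ)
    (hMμ0 : PowerSeries.constantCoeff Mμ = 0)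
    (hMν0 : PowerSeries.constantCoeff Mν = 0)
    (hRν0 : PowerSeries.constantCoeff Rν = 0)
    (hC0 : PowerSeries.constantCoeff Cs = 0)
    (hR : pcomp Rν (PowerSeries.X * (1 + Mν)) = Mν)
    (hC : pcomp Cs (PowerSeries.X * (1 + Mν)) * (1 + Mμ) = Mμ * (1 + Mν))
    (hCα : Cs = α • Rν) :
    Mμ * (1 + Mμ)⁻¹ = α • (Mν * (1 + Mν)⁻¹) := by
  have key : (α • Mν) * (1 + Mμ) = Mμ * (1 + Mν) := by
    rw [hCα, pcomp_smul, hR] at hC; exact hC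
  have hμ : (1 + Mμ) * (1 + Mμ)⁻¹ = 1 :=
    PowerSeries.mul_inv_cancel _ (by simp [hMμ0])
  have hν : (1 + Mν) * (1 + Mν)⁻¹ = 1 :=
    PowerSeries.mul_inv_cancel _ (by simp [hMν0])
  calc Mμ * (1 + Mμ)⁻¹
      = Mμ * (1 + Mν) * ((1 + Mν)⁻¹ * (1 + Mμ)⁻¹) := by
        rw [show Mμ * (1 + Mν) * ((1 + Mν)⁻¹ * (1 + Mμ)⁻¹)
            = Mμ * ((1 + Mν) * (1 + Mν)⁻¹) * (1 + Mμ)⁻¹ by ring, hν, mul_one]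
    _ = (α • Mν) * (1 + Mμ) * ((1 + Mν)⁻¹ * (1 + Mμ)⁻¹) := by rw [key]
    _ = α • (Mν * (1 + Mν)⁻¹) := by
        rw [smul_mul_assoc, smul_mul_assoc]
        congr 1
        rw [show Mν * (1 + Mμ) * ((1 + Mν)⁻¹ * (1 + Mμ)⁻¹)
            = Mν * (1 + Mν)⁻¹ * ((1 + Mμ) * (1 + Mμ)⁻¹) by ring, hμ, mul_one]
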